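/- Let C be a linear code of length n over RG identified with R^n, formed as the row space of σ(v) for some v ∈ RG, and let Ψ: RG → R^n be the canonical coordinate map. Then Ψ^{-1}(C^⊥) is a left ideal of RG. -/

import Mathlib

/-- The matrix σ(v) of a group ring element, with (i,j) entry the coefficient of i⁻¹ * j. -/
noncomputable def sigmaMat {R G : Type*} [Semiring R] [Group G] (v : MonoidAlgebra R G) :
    Matrix G G R := Matrix.of fun i j => v.coeff (i⁻¹ * j)

/-- The canonical involution on a group ring, sending Σ αᵢ gᵢ to Σ αᵢ gᵢ⁻¹. -/
noncomputable def transInvol {R G : Type*} [Semiring R] [Group G] (v : MonoidAlgebra R G) :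
    MonoidAlgebra R G := MonoidAlgebra.ofCoeff (Finsupp.equivMapDomain (Equiv.inv G) v.coeff)
/-- The Euclidean dual of a linear code C ⊆ R^ι. -/
noncomputable def dualCode {R ι : Type*} [CommRing R] [Fintype ι] (C : Submodule R (ι → R)) :
    Submodule R (ι → R) where
  carrier := {x | ∀ c ∈ C, ∑ i, x i * c i = 0}
  add_mem' := by
    intro a b ha hb c hc
    have h1 := ha c hc
    have h2 := hb c hc
    simp only [Pi.add_apply, add_mul, Finset.sum_add_distrib, h1, h2, add_zero]
  zero_mem' := by intro c hc; simp
  smul_mem' := by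
    intro r x hx c hc
    have h := hx c hc
    simp only [Pi.smul_apply, smul_eq_mul, mul_assoc]
    rw [← Finset.mul_sum, h, mul_zero]
/-- The preimage Ψ⁻¹(C^⊥) of the dual of the code C = C(v) under the coordinate map
    is a left ideal of RG. -/
theorem stmt_13 (R G : Type*) [CommRing R] [Fintype R] [Group G] [Fintype G]
    (v : MonoidAlgebra R G) :
    let C := Submodule.span R (Set.range fun i => sigmaMat v i)
    let S := {w : MonoidAlgebra R G | (fun g => w.coeff g) ∈ dualCode C}
    (0 : MonoidAlgebra R G) ∈ S ∧
      (∀ a ∈ S, ∀ b ∈ S, a + b ∈ S) ∧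
      (∀ r : MonoidAlgebra R G, ∀ a ∈ S, r * a ∈ S) := by
  intro C S
  have key : ∀ w : MonoidAlgebra R G, w ∈ S ↔ ∀ i : G, ∑ g, w.coeff g * v.coeff (i⁻¹ * g) = 0 := by
    intro w
    constructor
    · intro hw i
      exact hw (sigmaMat v i) (Submodule.subset_span ⟨i, rfl⟩)
    · intro h c hc
      induction hc using Submodule.span_induction with
      | mem x hx => obtain ⟨i, rfl⟩ := hx; exact h i
      | zero => simp
      | add x y _ _ hx hy =>
        simp only [Pi.add_apply, mul_add, Finset.sum_add_distrib, hx, hy, add_zero]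
      | smul t x _ hx =>
        simp only [Pi.smul_apply, smul_eq_mul, mul_left_comm, ← Finset.mul_sum, hx, mul_zero]
  refine ⟨(key 0).mpr (by simp), ?_, ?_⟩
  · intro a ha b hb
    refine (key _).mpr fun i => ?_
    have h1 := (key a).mp ha i
    have h2 := (key b).mp hb i
    have : ∀ g, (a + b).coeff g = a.coeff g + b.coeff g := fun g => rfl
    simp only [this, add_mul, Finset.sum_add_distrib]
    rw [h1, h2, add_zero]
  · intro r a ha
    have ha' := (key a).mp ha
    refine (key _).mpr fun i => ?_
    calc ∑ g, (r * a).coeff g * v.coeff (i⁻¹ * g)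
        = ∑ g, (∑ h ∈ r.coeff.support, r.coeff h * a.coeff (h⁻¹ * g)) * v.coeff (i⁻¹ * g) := by
          refine Finset.sum_congr rfl fun g _ => ?_
          rw [MonoidAlgebra.coeff_mul_apply_left]; rfl
      _ = ∑ h ∈ r.coeff.support, r.coeff h * ∑ g, a.coeff (h⁻¹ * g) * v.coeff (i⁻¹ * g) := by
          simp only [Finset.sum_mul, mul_assoc, Finset.mul_sum]
          exact Finset.sum_comm
      _ = 0 := by
          refine Finset.sum_eq_zero fun h _ => ?_
          have : ∑ g, a.coeff (h⁻¹ * g) * v.coeff (i⁻¹ * g)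
              = ∑ g, a.coeff g * v.coeff ((h⁻¹ * i)⁻¹ * g) := by
            refine Fintype.sum_equiv (Equiv.mulLeft h⁻¹) _ _ fun g => ?_
            simp [mul_inv_rev, mul_assoc]
          rw [this, ha' (h⁻¹ * i), mul_zero]
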